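/- For every integer k ≥ 2 and every integer n ≥ 2 - k, |Q_n^{(k)} - (2α - 2) g_k(α) α^n| < 2, where α is the unique positive real root of x^k - 2x^{k-1} - ... - x - 1 and g_k(z) = (z - 1)/((k+1)z² - 3kz + k - 1). -/

import Mathlib

set_option maxHeartbeats 1600000 in
/-- For every integer k ≥ 2 and every integer n ≥ 2 - k,
`|Q_n^{(k)} - (2α - 2) g_k(α) α^n| < 2`, where α is the unique positive real root of
`x^k - 2x^(k-1) - ⋯ - x - 1` and `g_k(z) = (z - 1)/((k+1)z² - 3kz + k - 1)`. -/
theorem pellLucas_dominant_term_estimate (k : ℕ) (hk : 2 ≤ k)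
    (Q : ℤ → ℤ)
    (hQinit : ∀ n : ℤ, 2 - (k : ℤ) ≤ n → n ≤ -1 → Q n = 0)
    (hQ0 : Q 0 = 2) (hQ1 : Q 1 = 2)
    (hQrec : ∀ n : ℤ, 2 ≤ n →
      Q n = 2 * Q (n - 1) + ∑ i ∈ Finset.Icc 2 k, Q (n - (i : ℤ)))
    (α : ℝ) (hαpos : 0 < α)
    (hαroot : α ^ k - 2 * α ^ (k - 1) - ∑ i ∈ Finset.range (k - 1), α ^ i = 0) :
    ∀ n : ℤ, 2 - (k : ℤ) ≤ n →
      |(Q n : ℝ) - (2 * α - 2) *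
        ((α - 1) / (((k : ℝ) + 1) * α ^ 2 - 3 * (k : ℝ) * α + (k : ℝ) - 1)) *
        α ^ n| < 2 := by
  obtain ⟨m, rfl⟩ : ∃ m, k = m + 2 := ⟨k - 2, by omega⟩
  clear hk
  have hα0 : α ≠ 0 := ne_of_gt hαpos
  -- normalized root equation
  have hroot : α ^ (m+2) = 2 * α ^ (m+1) + ∑ i ∈ Finset.range (m+1), α ^ i := by
    have h := hαroot
    simp only [show m + 2 - 1 = m + 1 from rfl] at h
    linarith
  -- α > 2
  have hsum_ge : ∀ j ∈ Finset.range (m+1), (0:ℝ) ≤ α ^ j := by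
    intro j _; positivity
  have hα2 : 2 < α := by
    have h1 : (1:ℝ) ≤ ∑ i ∈ Finset.range (m+1), α ^ i := by
      have := Finset.single_le_sum hsum_ge (Finset.mem_range.mpr (show 0 < m+1 by omega))
      simpa using this
    have h3 : 0 < α ^ (m+1) := pow_pos hαpos _
    nlinarith [pow_succ α (m+1)]
  -- α ≥ 12/5
  have hα24 : (12:ℝ)/5 ≤ α := by
    have h1 : α ^ m ≤ ∑ i ∈ Finset.range (m+1), α ^ i :=
      Finset.single_le_sum hsum_ge (Finset.mem_range.mpr (by omega))
    have h3 : 0 < α ^ m := pow_pos hαpos m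
    have h4 : 0 ≤ α ^ 2 - 2*α - 1 := by
      have h5 : α ^ m * (α^2 - 2*α - 1) = α ^ (m+2) - 2 * α^(m+1) - α ^ m := by ring
      nlinarith
    nlinarith [sq_nonneg (5*α - 12)]
  have htpos : (0:ℝ) < α ^ (m+1) := pow_pos hαpos _
  -- key identity
  have ht : α^2 * α^(m+1) = 3*α*α^(m+1) - α^(m+1) - 1 := by
    have h1 : (∑ i ∈ Finset.range (m+1), α ^ i) * (α - 1) = α ^ (m+1) - 1 :=
      geom_sum_mul α (m+1)
    have h2 : (α ^ (m+2) - 2 * α ^ (m+1)) * (α - 1) = α ^ (m+1) - 1 := by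
      rw [← h1]; congr 1; linarith
    linear_combination h2
  -- α < 3
  have hα3 : α < 3 := by
    by_contra h
    push_neg at h
    nlinarith [mul_nonneg (mul_nonneg (show (0:ℝ) ≤ α - 3 by linarith) hαpos.le) htpos.le]
  -- α^(m+1) > m + 2
  have htk : ((m:ℝ) + 2) < α^(m+1) := by
    have h1 : (2:ℝ)^(m+1) < α^(m+1) := by
      apply pow_lt_pow_left₀ hα2 (by norm_num)
      omega
    have h2 : (m + 2 : ℕ) ≤ 2^(m+1) := Nat.succ_le_of_lt (Nat.lt_two_pow_self (n := m+1))
    have h3 : ((m:ℝ) + 2) ≤ (2:ℝ)^(m+1) := by exact_mod_cast h2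
    linarith
  have hden2pos : 0 < 3*α*α^(m+1) - 2*α^(m+1) - ((m:ℝ)+2) - 1 := by nlinarith
  have identity1 : (α-1)^2 * (3*α*α^(m+1) - 2*α^(m+1) - ((m:ℝ)+2) - 1)
      = (α*α^(m+1) - 1) * (((m:ℝ) + 2 + 1) * α ^ 2 - 3 * ((m:ℝ)+2) * α + ((m:ℝ)+2) - 1) := by
    linear_combination (2*(α-1) - ((m:ℝ)+2)*α) * ht
  have hat1 : 0 < α*α^(m+1) - 1 := by nlinarith
  have hDpos : 0 < ((m:ℝ) + 2 + 1) * α ^ 2 - 3 * ((m:ℝ)+2) * α + ((m:ℝ)+2) - 1 := by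
    nlinarith [identity1, sq_nonneg (α-1)]
  obtain ⟨c, hcdef⟩ : ∃ c : ℝ, c = (2 * α - 2) *
      ((α - 1) / (((m:ℝ) + 2 + 1) * α ^ 2 - 3 * ((m:ℝ)+2) * α + ((m:ℝ)+2) - 1)) := ⟨_, rfl⟩
  have hc : c * (3*α*α^(m+1) - 2*α^(m+1) - ((m:ℝ)+2) - 1) = 2*(α*α^(m+1) - 1) := by
    have hD0 : (((m:ℝ) + 2 + 1) * α ^ 2 - 3 * ((m:ℝ)+2) * α + ((m:ℝ)+2) - 1) ≠ 0 :=
      ne_of_gt hDpos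
    rw [hcdef]
    rw [mul_div_assoc', div_mul_eq_mul_div, div_eq_iff hD0]
    linear_combination 2 * identity1
  have hcpos : 0 < c := by nlinarith
  have hca : c * α < 4 := by nlinarith
  have hc2 : c < 2 := by nlinarith
  -- the error sequence
  obtain ⟨E, hEdef⟩ : ∃ E : ℤ → ℝ, E = fun n => (Q n : ℝ) - c * α ^ n := ⟨_, rfl⟩
  have hQinit' : ∀ n : ℤ, -(m:ℤ) ≤ n → n ≤ -1 → Q n = 0 := by
    intro n h1 h2; exact hQinit n (by push_cast; omega) h2
  have hEneg : ∀ n : ℤ, -(m:ℤ) ≤ n → n ≤ -1 → E n = - (c * α ^ n) := by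
    intro n h1 h2; rw [hEdef]; simp [hQinit' n h1 h2]
  have hE0 : E 0 = 2 - c := by rw [hEdef]; simp [hQ0]
  have hE1 : E 1 = 2 - c * α := by rw [hEdef]; simp [hQ1]
  -- Icc → range conversions
  have hIccR : ∀ f : ℤ → ℝ, ∀ n : ℤ, ∑ i ∈ Finset.Icc 2 (m+2), f (n - (i:ℤ))
      = ∑ j ∈ Finset.range (m+1), f (n - 2 - (j:ℤ)) := by
    intro f n
    rw [show Finset.Icc 2 (m+2) = Finset.Ico 2 (m+3) by ext x; simp [Nat.lt_succ_iff],
      Finset.sum_Ico_eq_sum_range, show m+3-2 = m+1 by omega]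
    apply Finset.sum_congr rfl
    intro j _
    congr 1
    push_cast
    ring
  have hIccZ : ∀ f : ℤ → ℤ, ∀ n : ℤ, ∑ i ∈ Finset.Icc 2 (m+2), f (n - (i:ℤ))
      = ∑ j ∈ Finset.range (m+1), f (n - 2 - (j:ℤ)) := by
    intro f n
    rw [show Finset.Icc 2 (m+2) = Finset.Ico 2 (m+3) by ext x; simp [Nat.lt_succ_iff],
      Finset.sum_Ico_eq_sum_range, show m+3-2 = m+1 by omega]
    apply Finset.sum_congr rfl
    intro j _
    congr 1
    push_cast
    ring
  -- Q 2 = 6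
  have hQ2 : Q 2 = 6 := by
    have h := hQrec 2 (by norm_num)
    have hIcc : ∑ i ∈ Finset.Icc 2 (m+2), Q (2 - (i:ℤ)) = 2 := by
      rw [hIccZ Q 2, Finset.sum_range_succ']
      have hz : ∀ j ∈ Finset.range m, Q (2 - 2 - (((j:ℕ)+1:ℕ):ℤ)) = 0 := by
        intro j hj
        simp only [Finset.mem_range] at hj
        exact hQinit' _ (by push_cast; omega) (by push_cast; omega)
      rw [Finset.sum_congr rfl hz]
      norm_num [hQ0]
    rw [hIcc] at h
    norm_num [hQ1] at h
    omega
  -- recurrence for E, in range form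
  have hErec : ∀ n : ℤ, 2 ≤ n →
      E n = 2 * E (n-1) + ∑ j ∈ Finset.range (m+1), E (n - 2 - (j:ℤ)) := by
    intro n hn
    have hQr : (Q n : ℝ) = 2 * (Q (n-1) : ℝ) + ∑ j ∈ Finset.range (m+1), (Q (n - 2 - (j:ℤ)) : ℝ) := by
      have h := hQrec n hn
      rw [hIccZ Q n] at h
      rw [h]
      push_cast
      ring
    have hpow : α ^ n = 2 * α ^ (n-1) + ∑ j ∈ Finset.range (m+1), α ^ (n - 2 - (j:ℤ)) := by
      have hterm : ∀ j ∈ Finset.range (m+1),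
          α ^ (n - 2 - (j:ℤ)) = α ^ (n - (m+2:ℤ)) * α ^ ((m - j : ℕ)) := by
        intro j hj
        simp only [Finset.mem_range] at hj
        rw [← zpow_natCast α (m - j), ← zpow_add₀ hα0]
        congr 1
        have : ((m - j : ℕ) : ℤ) = (m:ℤ) - (j:ℤ) := by omega
        rw [this]; ring
      rw [Finset.sum_congr rfl hterm, ← Finset.mul_sum]
      have hrefl : ∑ j ∈ Finset.range (m+1), α ^ ((m - j : ℕ)) =
          ∑ j ∈ Finset.range (m+1), α ^ j := by
        have := Finset.sum_range_reflect (fun j => α ^ j) (m+1)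
        simpa using this
      rw [hrefl]
      have hsum : ∑ j ∈ Finset.range (m+1), α ^ j = α ^ (m+2) - 2 * α^(m+1) := by linarith
      rw [hsum]
      have e1 : α ^ n = α ^ (n - (m+2:ℤ)) * α ^ (m+2) := by
        rw [← zpow_natCast α (m+2), ← zpow_add₀ hα0]; congr 1; push_cast; ring
      have e2 : α ^ (n-1) = α ^ (n - (m+2:ℤ)) * α ^ (m+1) := by
        rw [← zpow_natCast α (m+1), ← zpow_add₀ hα0]; congr 1; push_cast; ring
      rw [e1, e2]; ring
    simp only [hEdef]
    rw [hQr, hpow, Finset.sum_sub_distrib, ← Finset.mul_sum]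
    ring
  -- sparse recurrence
  have hsparse : ∀ n : ℤ, 2 ≤ n → E (n+1) = 3 * E n - E (n-1) - E (n - (m+2:ℤ)) := by
    intro n hn
    have h1 := hErec (n+1) (by omega)
    have h2 := hErec n hn
    have h1s : ∑ j ∈ Finset.range (m+1), E (n + 1 - 2 - (j:ℤ))
        = (∑ j ∈ Finset.range m, E (n - 2 - (j:ℤ))) + E (n - 1) := by
      rw [Finset.sum_range_succ']
      congr 1
      · apply Finset.sum_congr rfl
        intro j _
        congr 1
        push_cast
        ring
      · congr 1
        push_cast
        ring
    have h2s : ∑ j ∈ Finset.range (m+1), E (n - 2 - (j:ℤ))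
        = (∑ j ∈ Finset.range m, E (n - 2 - (j:ℤ))) + E (n - (m+2:ℤ)) := by
      rw [Finset.sum_range_succ]
      congr 2
      push_cast
      ring
    rw [h1s] at h1
    rw [h2s] at h2
    rw [show n + 1 - 1 = n by ring] at h1
    linarith
  -- zpow helper
  have hzm : α ^ (-1 - (m:ℤ)) = (α^(m+1))⁻¹ := by
    rw [show (-1 - (m:ℤ)) = -(((m+1:ℕ)):ℤ) by push_cast; ring, zpow_neg, zpow_natCast]
  have hti : (α^(m+1))⁻¹ = 3*α - α^2 - 1 := by
    have h1 : (3*α - α^2 - 1) * α^(m+1) = 1 := by linarith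
    exact (eq_inv_of_mul_eq_one_left h1).symm
  -- the convex-combination recurrence (star)
  have hstar : ∀ n : ℤ, 2 ≤ n →
      E n = (3 - α) * E (n-1) +
        ∑ j ∈ Finset.range (m+1), α ^ (-1 - (j:ℤ)) * E (n - (m+2:ℤ) + (j:ℤ)) := by
    intro n hn
    refine Int.le_induction (motive := fun n _ => E n = (3 - α) * E (n-1) +
      ∑ j ∈ Finset.range (m+1), α ^ (-1 - (j:ℤ)) * E (n - (m+2:ℤ) + (j:ℤ))) ?_ ?_ n hn
    · show E 2 = (3 - α) * E (2-1) +
        ∑ j ∈ Finset.range (m+1), α ^ (-1 - (j:ℤ)) * E (2 - (m+2:ℤ) + (j:ℤ))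
      rw [Finset.sum_range_succ]
      rw [show (2:ℤ) - (m+2:ℤ) + ((m:ℕ):ℤ) = 0 by push_cast; ring, hE0]
      have hz : ∀ j ∈ Finset.range m,
          α ^ (-1 - (j:ℤ)) * E (2 - (m+2:ℤ) + (j:ℤ)) = -(c * (α^(m+1))⁻¹) := by
        intro j hj
        simp only [Finset.mem_range] at hj
        rw [hEneg (2 - (m+2:ℤ) + (j:ℤ)) (by push_cast; omega) (by push_cast; omega)]
        rw [show α ^ (-1 - (j:ℤ)) * -(c * α ^ (2 - (m+2:ℤ) + (j:ℤ)))
            = -(c * (α ^ (-1 - (j:ℤ)) * α ^ (2 - (m+2:ℤ) + (j:ℤ)))) by ring]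
        rw [← zpow_add₀ hα0]
        rw [show (-1 - (j:ℤ)) + (2 - (m+2:ℤ) + (j:ℤ)) = -(((m+1:ℕ)):ℤ) by push_cast; ring]
        rw [zpow_neg, zpow_natCast]
      rw [Finset.sum_congr rfl hz, Finset.sum_const, Finset.card_range]
      have hE2 : E 2 = 6 - c * α^2 := by
        rw [hEdef]
        simp only [hQ2]
        rw [show (2:ℤ) = ((2:ℕ):ℤ) by norm_num, zpow_natCast]
        push_cast; ring
      have hE1' : E (2-1) = 2 - c*α := by rw [show (2:ℤ)-1 = 1 by norm_num, hE1]
      rw [hE2, hE1', hzm, hti]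
      apply mul_left_cancel₀ (ne_of_gt htpos)
      linear_combination (2 - 3*c - (m:ℝ)*c) * ht - hc
    · intro n hn2 ih
      have hA := ih
      have hApeel : ∑ j ∈ Finset.range (m+1), α ^ (-1 - (j:ℤ)) * E (n - (m+2:ℤ) + (j:ℤ))
          = (∑ j ∈ Finset.range m, α ^ (-2 - (j:ℤ)) * E (n - (m+1:ℤ) + (j:ℤ)))
            + α⁻¹ * E (n - (m+2:ℤ)) := by
        rw [Finset.sum_range_succ']
        congr 1
        · apply Finset.sum_congr rfl
          intro j _
          congr 1
          · congr 1
            push_cast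
            ring
          · congr 1
            push_cast
            ring
        · norm_num
      have hBpeel : ∑ j ∈ Finset.range (m+1), α ^ (-1 - (j:ℤ)) * E (n + 1 - (m+2:ℤ) + (j:ℤ))
          = (∑ j ∈ Finset.range m, α ^ (-1 - (j:ℤ)) * E (n - (m+1:ℤ) + (j:ℤ)))
            + (α^(m+1))⁻¹ * E (n - 1) := by
        rw [Finset.sum_range_succ]
        congr 1
        · apply Finset.sum_congr rfl
          intro j _
          congr 2
          push_cast
          ring
        · rw [hzm.symm]
          congr 2
          push_cast
          ring
      have hBC : ∑ j ∈ Finset.range m, α ^ (-1 - (j:ℤ)) * E (n - (m+1:ℤ) + (j:ℤ))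
          = α * (∑ j ∈ Finset.range m, α ^ (-2 - (j:ℤ)) * E (n - (m+1:ℤ) + (j:ℤ))) := by
        rw [Finset.mul_sum]
        apply Finset.sum_congr rfl
        intro j _
        rw [show α * (α ^ (-2 - (j:ℤ)) * E (n - (m+1:ℤ) + (j:ℤ)))
            = (α^(1:ℤ) * α ^ (-2 - (j:ℤ))) * E (n - (m+1:ℤ) + (j:ℤ)) by rw [zpow_one, mul_assoc],
          ← zpow_add₀ hα0, show (1:ℤ) + (-2 - (j:ℤ)) = -1 - (j:ℤ) by ring]
      have hsp := hsparse n hn2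
      rw [show n + 1 - 1 = n by ring, hBpeel, hBC]
      have hC : (∑ j ∈ Finset.range m, α ^ (-2 - (j:ℤ)) * E (n - (m+1:ℤ) + (j:ℤ)))
          = (∑ j ∈ Finset.range (m+1), α ^ (-1 - (j:ℤ)) * E (n - (m+2:ℤ) + (j:ℤ)))
            - α⁻¹ * E (n - (m+2:ℤ)) := by linarith [hApeel]
      rw [hC]
      have hEnA : (∑ j ∈ Finset.range (m+1), α ^ (-1 - (j:ℤ)) * E (n - (m+2:ℤ) + (j:ℤ)))
          = E n - (3 - α) * E (n-1) := by linarith [hA]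
      rw [hEnA, hsp]
      have hinv1 : α * α⁻¹ = 1 := mul_inv_cancel₀ hα0
      linear_combination E (n - ((m:ℤ)+2)) * hinv1 - E (n-1) * hti
  -- sum of the coefficients
  have hσ : ∑ j ∈ Finset.range (m+1), α ^ (-1 - (j:ℤ)) = α - 2 := by
    have hterm : ∀ j ∈ Finset.range (m+1),
        α ^ (-1 - (j:ℤ)) = (α^(m+1))⁻¹ * α ^ ((m - j : ℕ)) := by
      intro j hj
      simp only [Finset.mem_range] at hj
      rw [← zpow_natCast α (m - j)]
      rw [show ((α:ℝ)^(m+1))⁻¹ = α ^ (-(((m+1:ℕ)):ℤ)) by rw [zpow_neg, zpow_natCast]]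
      rw [← zpow_add₀ hα0]
      congr 1
      omega
    rw [Finset.sum_congr rfl hterm, ← Finset.mul_sum]
    have hrefl : ∑ j ∈ Finset.range (m+1), α ^ ((m - j : ℕ)) =
        ∑ j ∈ Finset.range (m+1), α ^ j := by
      have := Finset.sum_range_reflect (fun j => α ^ j) (m+1)
      simpa using this
    rw [hrefl]
    have hsum : ∑ j ∈ Finset.range (m+1), α ^ j = α ^ (m+2) - 2 * α^(m+1) := by linarith
    rw [hsum, hti]
    linear_combination (2 - α) * ht
  have hcoefpos : ∀ j : ℕ, (0:ℝ) < α ^ (-1 - (j:ℤ)) := by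
    intro j; exact zpow_pos hαpos _
  -- main bound by strong induction
  have main : ∀ p : ℕ, ∀ n : ℤ, -(m:ℤ) ≤ n → n ≤ 1 + (p:ℤ) → |E n| < 2 := by
    intro p
    induction p with
    | zero =>
      intro n h1 h2
      norm_num at h2
      rcases lt_or_ge n 0 with h | h
      · have hneg : n ≤ -1 := by omega
        rw [hEneg n h1 hneg, abs_neg, abs_of_pos (by positivity)]
        have hαn : α ^ n ≤ α ^ (-1:ℤ) :=
          zpow_le_zpow_right₀ (by linarith : (1:ℝ) ≤ α) hneg
        rw [zpow_neg_one] at hαn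
        have hinv1 : α * α⁻¹ = 1 := mul_inv_cancel₀ hα0
        have hinvpos : (0:ℝ) < α⁻¹ := inv_pos.mpr hαpos
        have h5 : c * α⁻¹ < 2 := by nlinarith
        have h6 : c * α ^ n ≤ c * α⁻¹ :=
          mul_le_mul_of_nonneg_left hαn (le_of_lt hcpos)
        linarith
      · have : n = 0 ∨ n = 1 := by omega
        rcases this with rfl | rfl
        · rw [hE0, abs_lt]; constructor <;> nlinarith
        · rw [hE1, abs_lt]; constructor <;> nlinarith
    | succ p ih =>
      intro n h1 h2
      by_cases hcase : n ≤ 1 + (p:ℤ)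
      · exact ih n h1 hcase
      · have hn2 : (2:ℤ) ≤ n := by push_cast at h2 ⊢; omega
        have hs := hstar n hn2
        have hb1 : |E (n-1)| < 2 := ih (n-1) (by omega) (by push_cast at h2 ⊢; omega)
        have hbs : ∀ j ∈ Finset.range (m+1), |E (n - (m+2:ℤ) + (j:ℤ))| < 2 := by
          intro j hj
          simp only [Finset.mem_range] at hj
          apply ih
          · push_cast; omega
          · push_cast at h2 ⊢; omega
        calc |E n| = |(3 - α) * E (n-1) +
              ∑ j ∈ Finset.range (m+1), α ^ (-1 - (j:ℤ)) * E (n - (m+2:ℤ) + (j:ℤ))| := by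
                rw [hs]
          _ ≤ |(3 - α) * E (n-1)| +
              |∑ j ∈ Finset.range (m+1), α ^ (-1 - (j:ℤ)) * E (n - (m+2:ℤ) + (j:ℤ))| :=
                abs_add_le _ _
          _ ≤ (3 - α) * |E (n-1)| +
              ∑ j ∈ Finset.range (m+1), α ^ (-1 - (j:ℤ)) * |E (n - (m+2:ℤ) + (j:ℤ))| := by
                apply add_le_add
                · rw [abs_mul, abs_of_nonneg (by linarith : (0:ℝ) ≤ 3 - α)]
                · calc |∑ j ∈ Finset.range (m+1), α ^ (-1 - (j:ℤ)) * E (n - (m+2:ℤ) + (j:ℤ))|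
                      ≤ ∑ j ∈ Finset.range (m+1), |α ^ (-1 - (j:ℤ)) * E (n - (m+2:ℤ) + (j:ℤ))| :=
                        Finset.abs_sum_le_sum_abs _ _
                    _ = ∑ j ∈ Finset.range (m+1), α ^ (-1 - (j:ℤ)) * |E (n - (m+2:ℤ) + (j:ℤ))| := by
                        apply Finset.sum_congr rfl
                        intro j _
                        rw [abs_mul, abs_of_pos (hcoefpos j)]
          _ < (3 - α) * 2 + ∑ j ∈ Finset.range (m+1), α ^ (-1 - (j:ℤ)) * 2 := by
                apply add_lt_add_of_lt_of_le
                · exact mul_lt_mul_of_pos_left hb1 (by linarith)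
                · apply Finset.sum_le_sum
                  intro j hj
                  exact mul_le_mul_of_nonneg_left (le_of_lt (hbs j hj)) (le_of_lt (hcoefpos j))
          _ = 2 := by
                rw [← Finset.sum_mul, hσ]; ring
  -- conclude
  intro n hn
  have h1 : -(m:ℤ) ≤ n := by push_cast at hn ⊢; omega
  have h2 : n ≤ 1 + ((n + (m:ℤ)).toNat : ℤ) := by omega
  have hEn := main (n + (m:ℤ)).toNat n h1 h2
  have heq : (Q n : ℝ) - (2 * α - 2) *
        ((α - 1) / ((((m+2:ℕ) : ℝ) + 1) * α ^ 2 - 3 * ((m+2:ℕ) : ℝ) * α + ((m+2:ℕ) : ℝ) - 1)) *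
        α ^ n = E n := by
    rw [hEdef, hcdef]
    push_cast
    ring
  rw [heq]
  exact hEn
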